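/- Let k be a commutative ring, m ≥ 1, G = ℤ/mℤ with fixed generator g, and kG its group algebra with its standard Hopf algebra structure. Let α : kG → k be a character, ζ = α(g) (an m-th root of unity in k), and π = g^s an element with ζ^s = 1 (so α(π) = 1). For n ≥ 1 define χ_n : (kG)^{⊗n} → (kG)^{⊗n} by χ_n(g^{i_1} ⊗ … ⊗ g^{i_n}) = ζ^{i_1 + ⋯ + i_n} · g^{i_1} ⊗ … ⊗ g^{i_n} for 0 ≤ i_1, …, i_n < m (and χ_0 = id_k). Then χ is an isomorphism of cyclic modules from the Connes–Moscovici cyclic module C^{(π,α,α)}(kG) to C^{(π,ε,ε)}(kG): χ commutes with all face maps, degeneracies and cyclic operators of the two cyclic modules, and it is bijective, with inverse given by the analogous map built from ζ^{-1}. -/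

import Mathlib

/- Statement 11: for `G = ℤ/mℤ` with generator `g`, a character `α` with
`ζ = α(g)`, and `π = g^s` with `ζ^s = 1`, the map
`χ_n(g^{i₁} ⊗ ⋯ ⊗ g^{i_n}) = ζ^{i₁+⋯+i_n} g^{i₁} ⊗ ⋯ ⊗ g^{i_n}` is an
isomorphism of cyclic modules `C^{(π,α,α)}(kG) → C^{(π,ε,ε)}(kG)`: it commutes
with all faces, degeneracies and cyclic operators, and is bijective with
inverse the analogous map built from `ζ⁻¹ (= ζ^{m-1})`. -/

open scoped TensorProduct
open PiTensorProduct

namespace CMGrp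

variable (k : Type) [CommRing k] (m : ℕ) [NeZero m]

/-- The cyclic group `ℤ/mℤ`. -/
abbrev Zm := Multiplicative (ZMod m)

/-- The group algebra `k(ℤ/mℤ)`. -/
abbrev A := MonoidAlgebra k (Zm m)

/-- The chains of the Connes–Moscovici cyclic module: `C_n = (k(ℤ/mℤ))^{⊗n}`. -/
abbrev MW (n : ℕ) : Type := ⨂[k] (_ : Fin n), A k m

/-- The faces, degeneracies and cyclic operator of the Connes–Moscovici cyclic
module of the group algebra `k(ℤ/mℤ)` attached to `(π, α, β)`, characterized
on elementary tensors of group elements. -/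
noncomputable def IsCMcyclicModule (π : Zm m) (α β : A k m →ₐ[k] k)
    (d : ∀ n : ℕ, ℕ → (MW k m (n + 1) →ₗ[k] MW k m n))
    (s : ∀ n : ℕ, ℕ → (MW k m n →ₗ[k] MW k m (n + 1)))
    (t : ∀ n : ℕ, MW k m n →ₗ[k] MW k m n) : Prop :=
  (∀ (n : ℕ) (g : Fin (n + 1) → Zm m),
    d n 0 (tprod k fun i => MonoidAlgebra.of k (Zm m) (g i)) =
      α (MonoidAlgebra.of k (Zm m) (g 0)) •
        tprod k (fun v : Fin n => MonoidAlgebra.of k (Zm m) (g v.succ))) ∧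
  (∀ (n i : ℕ), 1 ≤ i → i ≤ n → ∀ (g : Fin (n + 1) → Zm m),
    d n i (tprod k fun i => MonoidAlgebra.of k (Zm m) (g i)) =
      tprod k (fun v : Fin n =>
        if (v : ℕ) + 1 < i then MonoidAlgebra.of k (Zm m) (g v.castSucc)
        else if (v : ℕ) + 1 = i then MonoidAlgebra.of k (Zm m) (g v.castSucc * g v.succ)
        else MonoidAlgebra.of k (Zm m) (g v.succ))) ∧
  (∀ (n : ℕ) (g : Fin (n + 1) → Zm m),
    d n (n + 1) (tprod k fun i => MonoidAlgebra.of k (Zm m) (g i)) =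
      β (MonoidAlgebra.of k (Zm m) (g (Fin.last n))) •
        tprod k (fun v : Fin n => MonoidAlgebra.of k (Zm m) (g v.castSucc))) ∧
  (∀ (n i : ℕ) (hi : i ≤ n) (g : Fin n → Zm m),
    s n i (tprod k fun l => MonoidAlgebra.of k (Zm m) (g l)) =
      tprod k (fun v : Fin (n + 1) =>
        if h : (v : ℕ) < i then
          MonoidAlgebra.of k (Zm m) (g ⟨(v : ℕ), by have := v.isLt; omega⟩)
        else if h2 : (v : ℕ) = i then 1
        else MonoidAlgebra.of k (Zm m) (g ⟨(v : ℕ) - 1, by have := v.isLt; omega⟩))) ∧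
  (t 0 = LinearMap.id) ∧
  (∀ (n : ℕ) (g : Fin (n + 1) → Zm m),
    t (n + 1) (tprod k fun i => MonoidAlgebra.of k (Zm m) (g i)) =
      (α (MonoidAlgebra.of k (Zm m) ((List.ofFn g).prod)) *
          β (MonoidAlgebra.of k (Zm m) (g (Fin.last n)))) •
        PiTensorProduct.tprod k (Fin.cons
          (MonoidAlgebra.of k (Zm m) (π * ((List.ofFn g).prod)⁻¹))
          (fun i : Fin n => MonoidAlgebra.of k (Zm m) (g i.castSucc))))

/-- The counit of the group algebra: `ε(g) = 1`. -/
noncomputable def gcounit : A k m →ₐ[k] k := MonoidAlgebra.lift k k (Zm m) 1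

/-- `χ` is the family of maps
`χ_n(g^{i₁} ⊗ ⋯ ⊗ g^{i_n}) = ξ^{i₁+⋯+i_n} · g^{i₁} ⊗ ⋯ ⊗ g^{i_n}`
(for `0 ≤ i_l < m`), built from the scalar `ξ`. -/
noncomputable def IsChi (g : Zm m) (ξ : k)
    (χ : ∀ n : ℕ, MW k m n →ₗ[k] MW k m n) : Prop :=
  (χ 0 = LinearMap.id) ∧
  ∀ (n : ℕ) (i : Fin n → ℕ), (∀ l, i l < m) →
    χ n (tprod k fun l => MonoidAlgebra.of k (Zm m) (g ^ (i l))) =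
      (ξ ^ (∑ l, i l)) •
        tprod k (fun l => MonoidAlgebra.of k (Zm m) (g ^ (i l)))


section Aux

variable {k m}

lemma pow_mod_eq {M : Type*} [Monoid M] {x : M} (hx : x ^ m = 1) (a : ℕ) :
    x ^ a = x ^ (a % m) := by
  conv_lhs => rw [← Nat.div_add_mod a m]
  rw [pow_add, pow_mul, hx, one_pow, one_mul]

lemma orderOf_gen {g : Zm m} (hg : ∀ x : Zm m, ∃ j : ℕ, g ^ j = x) :
    orderOf g = m := by
  have h : ∀ x : Zm m, x ∈ Subgroup.zpowers g := by
    intro x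
    obtain ⟨j, hj⟩ := hg x
    exact ⟨(j : ℤ), by simpa using hj⟩
  have := orderOf_eq_card_of_forall_mem_zpowers h
  simpa [Nat.card_eq_fintype_card] using this

lemma gen_pow_card {g : Zm m} (hg : ∀ x : Zm m, ∃ j : ℕ, g ^ j = x) :
    g ^ m = 1 := by
  have := pow_orderOf_eq_one g
  rwa [orderOf_gen hg] at this

lemma pow_eq_of_gpow_eq {g : Zm m} (hg : ∀ x : Zm m, ∃ j : ℕ, g ^ j = x)
    {ζ : k} (hζ : ζ ^ m = 1) {a b : ℕ} (h : g ^ a = g ^ b) : ζ ^ a = ζ ^ b := by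
  have h2 : a % orderOf g = b % orderOf g := pow_inj_mod.mp h
  rw [orderOf_gen hg] at h2
  rw [pow_mod_eq hζ a, pow_mod_eq hζ b, h2]

/-- a representative exponent below `m`. -/
noncomputable def rep {g : Zm m} (hg : ∀ x : Zm m, ∃ j : ℕ, g ^ j = x) (x : Zm m) : ℕ :=
  (hg x).choose % m

lemma rep_lt {g : Zm m} (hg : ∀ x : Zm m, ∃ j : ℕ, g ^ j = x) (x : Zm m) :
    rep hg x < m :=
  Nat.mod_lt _ (Nat.pos_of_ne_zero (NeZero.ne m))

lemma rep_spec {g : Zm m} (hg : ∀ x : Zm m, ∃ j : ℕ, g ^ j = x) (x : Zm m) :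
    g ^ rep hg x = x := by
  rw [rep, ← pow_mod_eq (gen_pow_card hg)]
  exact (hg x).choose_spec

/-- the basis of the group algebra given by group elements. -/
noncomputable def mabasis : Module.Basis (Zm m) k (A k m) := MonoidAlgebra.basis (Zm m) k

lemma mabasis_apply (x : Zm m) : (mabasis : Module.Basis (Zm m) k (A k m)) x
    = MonoidAlgebra.of k (Zm m) x := by
  rw [mabasis]
  rfl

lemma mw_ext {g : Zm m} (hg : ∀ x : Zm m, ∃ j : ℕ, g ^ j = x) {n : ℕ} {N : Type*}
    [AddCommMonoid N] [Module k N] {f₁ f₂ : MW k m n →ₗ[k] N}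
    (h : ∀ i : Fin n → ℕ,
      f₁ (tprod k fun l => MonoidAlgebra.of k (Zm m) (g ^ (i l))) =
      f₂ (tprod k fun l => MonoidAlgebra.of k (Zm m) (g ^ (i l)))) : f₁ = f₂ := by
  apply PiTensorProduct.ext
  apply Module.Basis.ext_multilinear (fun _ => (mabasis : Module.Basis (Zm m) k (A k m)))
  intro v
  have key : (fun i : Fin n => (mabasis : Module.Basis (Zm m) k (A k m)) (v i))
      = fun i => MonoidAlgebra.of k (Zm m) (g ^ rep hg (v i)) := by
    funext i
    rw [rep_spec hg, mabasis_apply]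
  simp only [LinearMap.compMultilinearMap_apply]
  rw [key]
  exact h _

lemma chi_apply {g : Zm m} (hg : ∀ x : Zm m, ∃ j : ℕ, g ^ j = x) {ξ : k}
    {χ : ∀ n : ℕ, MW k m n →ₗ[k] MW k m n} (hχ : IsChi k m g ξ χ) (hξ : ξ ^ m = 1)
    (n : ℕ) (i : Fin n → ℕ) :
    χ n (tprod k fun l => MonoidAlgebra.of k (Zm m) (g ^ (i l))) =
      (ξ ^ (∑ l, i l)) • tprod k (fun l => MonoidAlgebra.of k (Zm m) (g ^ (i l))) := by
  have hgm := gen_pow_card hg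
  have h1 : (fun l => MonoidAlgebra.of k (Zm m) (g ^ (i l)))
      = fun l => MonoidAlgebra.of k (Zm m) (g ^ (i l % m)) := by
    funext l; rw [← pow_mod_eq hgm]
  rw [h1, hχ.2 n (fun l => i l % m)
    (fun l => Nat.mod_lt _ (Nat.pos_of_ne_zero (NeZero.ne m)))]
  congr 1
  rw [pow_mod_eq hξ (∑ l, i l % m), pow_mod_eq hξ (∑ l, i l)]
  congr 1
  exact (Finset.sum_nat_mod Finset.univ m i).symm

lemma merge_sum (a : ℕ → ℕ) : ∀ (n p : ℕ), 1 ≤ p → p ≤ n →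
    (∑ v ∈ Finset.range n,
      (if v + 1 < p then a v else if v + 1 = p then a v + a (v + 1) else a (v + 1)))
      = ∑ v ∈ Finset.range (n + 1), a v := by
  intro n
  induction n with
  | zero => intro p h1 h2; omega
  | succ n ih =>
    intro p h1 h2
    rw [Finset.sum_range_succ]
    rcases Nat.lt_or_ge p (n + 1) with h | h
    · rw [if_neg (by omega), if_neg (by omega), ih p h1 (by omega),
        Finset.sum_range_succ (f := a) (n := n + 1)]
    · have hp : p = n + 1 := by omega
      subst hp
      rw [if_neg (by omega), if_pos rfl,
        Finset.sum_congr rfl (fun v hv => if_pos (by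
          have := Finset.mem_range.mp hv; omega)),
        Finset.sum_range_succ (f := fun v => a v) (n := n + 1),
        Finset.sum_range_succ (f := fun v => a v) (n := n)]
      have h0 : (Finset.range n).sum a = ∑ x ∈ Finset.range n, a x := rfl
      omega

lemma insert_sum (a : ℕ → ℕ) : ∀ (n p : ℕ), p ≤ n →
    (∑ v ∈ Finset.range (n + 1),
      (if v < p then a v else if v = p then 0 else a (v - 1)))
      = ∑ v ∈ Finset.range n, a v := by
  intro n
  induction n with
  | zero =>
    intro p hp
    interval_cases p
    simp
  | succ n ih =>
    intro p hp
    rw [Finset.sum_range_succ]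
    rcases Nat.lt_or_ge p (n + 1) with h | h
    · rw [if_neg (by omega), if_neg (by omega), ih p (by omega),
        Finset.sum_range_succ (f := a) (n := n)]
      norm_num
    · have hp' : p = n + 1 := by omega
      subst hp'
      rw [if_neg (by omega), if_pos rfl, add_zero]
      exact Finset.sum_congr rfl fun v hv => if_pos (Finset.mem_range.mp hv)

end Aux

/-- With `ζ = α(g)` and `π = g^s`, `ζ^s = 1`, the map `χ`
is an isomorphism of cyclic modules from `C^{(π,α,α)}(kG)` to
`C^{(π,ε,ε)}(kG)`: it intertwines the faces, degeneracies and cyclic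
operators, and is bijective with inverse the analogous map built from
`ζ⁻¹ = ζ^{m-1}`. -/
theorem chi_iso_cyclic_modules
    (g : Zm m) (hg : ∀ x : Zm m, ∃ j : ℕ, g ^ j = x)
    (α : A k m →ₐ[k] k) (s : ℕ)
    (hζs : (α (MonoidAlgebra.of k (Zm m) g)) ^ s = 1)
    (dA : ∀ n : ℕ, ℕ → (MW k m (n + 1) →ₗ[k] MW k m n))
    (sA : ∀ n : ℕ, ℕ → (MW k m n →ₗ[k] MW k m (n + 1)))
    (tA : ∀ n : ℕ, MW k m n →ₗ[k] MW k m n)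
    (hA : IsCMcyclicModule k m (g ^ s) α α dA sA tA)
    (dE : ∀ n : ℕ, ℕ → (MW k m (n + 1) →ₗ[k] MW k m n))
    (sE : ∀ n : ℕ, ℕ → (MW k m n →ₗ[k] MW k m (n + 1)))
    (tE : ∀ n : ℕ, MW k m n →ₗ[k] MW k m n)
    (hE : IsCMcyclicModule k m (g ^ s) (gcounit k m) (gcounit k m) dE sE tE)
    (χ : ∀ n : ℕ, MW k m n →ₗ[k] MW k m n)
    (hχ : IsChi k m g (α (MonoidAlgebra.of k (Zm m) g)) χ)
    (χ' : ∀ n : ℕ, MW k m n →ₗ[k] MW k m n)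
    (hχ' : IsChi k m g ((α (MonoidAlgebra.of k (Zm m) g)) ^ (m - 1)) χ') :
    (∀ (n i : ℕ), i ≤ n + 1 → (dE n i) ∘ₗ (χ (n + 1)) = (χ n) ∘ₗ (dA n i)) ∧
    (∀ (n i : ℕ), i ≤ n → (sE n i) ∘ₗ (χ n) = (χ (n + 1)) ∘ₗ (sA n i)) ∧
    (∀ n : ℕ, (tE n) ∘ₗ (χ n) = (χ n) ∘ₗ (tA n)) ∧
    (∀ n : ℕ, (χ' n) ∘ₗ (χ n) = LinearMap.id ∧ (χ n) ∘ₗ (χ' n) = LinearMap.id) := by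
  obtain ⟨hA0, hAmid, hAlast, hAs, hAt0, hAt⟩ := hA
  obtain ⟨hE0, hEmid, hElast, hEs, hEt0, hEt⟩ := hE
  set ζ := α (MonoidAlgebra.of k (Zm m) g) with hζdef
  have hgm : g ^ m = 1 := gen_pow_card hg
  have hζm : ζ ^ m = 1 := by
    rw [hζdef, ← map_pow, ← map_pow, hgm, _root_.map_one, _root_.map_one]
  have hζm' : (ζ ^ (m - 1)) ^ m = 1 := by
    rw [← pow_mul, mul_comm, pow_mul, hζm, one_pow]
  have hα : ∀ j : ℕ, α (MonoidAlgebra.of k (Zm m) (g ^ j)) = ζ ^ j := by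
    intro j; rw [hζdef, ← map_pow, ← map_pow]
  have hε : ∀ x : Zm m, gcounit k m (MonoidAlgebra.of k (Zm m) x) = 1 := by
    intro x
    rw [gcounit, MonoidAlgebra.lift_of]
    rfl
  have hχa := chi_apply hg hχ hζm
  have hχa' := chi_apply hg hχ' hζm'
  refine ⟨?_, ?_, ?_, ?_⟩
  · -- faces
    intro n i hi
    apply mw_ext hg
    intro e
    simp only [LinearMap.comp_apply]
    rcases Nat.eq_zero_or_pos i with rfl | hi1
    · have L : dE n 0 (χ (n + 1) (tprod k fun l => MonoidAlgebra.of k (Zm m) (g ^ e l)))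
          = (ζ ^ ∑ l, e l) •
            tprod k (fun v : Fin n => MonoidAlgebra.of k (Zm m) (g ^ e v.succ)) := by
        rw [hχa (n + 1) e, map_smul, hE0 n (fun l => g ^ e l), hε, one_smul]
      have R : χ n (dA n 0 (tprod k fun l => MonoidAlgebra.of k (Zm m) (g ^ e l)))
          = (ζ ^ e 0 * ζ ^ ∑ v : Fin n, e v.succ) •
            tprod k (fun v : Fin n => MonoidAlgebra.of k (Zm m) (g ^ e v.succ)) := by
        rw [hA0 n (fun l => g ^ e l), map_smul, hχa n (fun v => e v.succ), hα, smul_smul]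
      rw [L, R, ← pow_add, Fin.sum_univ_succ]
    · rcases Nat.lt_or_ge i (n + 1) with hi2 | hi2
      · -- middle faces
        set jj : Fin n → ℕ := fun v =>
          if (v : ℕ) + 1 < i then e v.castSucc
          else if (v : ℕ) + 1 = i then e v.castSucc + e v.succ
          else e v.succ with hjj
        have hfun : (fun v : Fin n =>
            if (v : ℕ) + 1 < i then MonoidAlgebra.of k (Zm m) ((fun l => g ^ e l) v.castSucc)
            else if (v : ℕ) + 1 = i then
              MonoidAlgebra.of k (Zm m) ((fun l => g ^ e l) v.castSucc * (fun l => g ^ e l) v.succ)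
            else MonoidAlgebra.of k (Zm m) ((fun l => g ^ e l) v.succ))
            = fun v => MonoidAlgebra.of k (Zm m) (g ^ jj v) := by
          funext v
          by_cases h1 : (v : ℕ) + 1 < i <;> by_cases h2 : (v : ℕ) + 1 = i <;>
            simp [hjj, h1, h2, pow_add]
        have hsum : ∑ v : Fin n, jj v = ∑ l : Fin (n + 1), e l := by
          set ea : ℕ → ℕ := fun l => if h : l < n + 1 then e ⟨l, h⟩ else 0 with hea
          have h1 : ∑ v : Fin n, jj v = ∑ l ∈ Finset.range n,
              (if l + 1 < i then ea l else if l + 1 = i then ea l + ea (l + 1) else ea (l + 1)) := by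
            rw [← Fin.sum_univ_eq_sum_range]
            refine Finset.sum_congr rfl fun v _ => ?_
            have hv := v.isLt
            have e1 : ea (v : ℕ) = e v.castSucc := by
              simp only [hea]
              rw [dif_pos (show (v : ℕ) < n + 1 by omega)]
              exact congrArg e (Fin.ext rfl)
            have e2 : ea ((v : ℕ) + 1) = e v.succ := by
              simp only [hea]
              rw [dif_pos (show (v : ℕ) + 1 < n + 1 by omega)]
              exact congrArg e (Fin.ext rfl)
            simp only [hjj]
            by_cases h1 : (v : ℕ) + 1 < i
            · rw [if_pos h1, if_pos h1, e1]
            · rw [if_neg h1, if_neg h1]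
              by_cases h2 : (v : ℕ) + 1 = i
              · rw [if_pos h2, if_pos h2, e1, e2]
              · rw [if_neg h2, if_neg h2, e2]
          have h2 : ∑ l ∈ Finset.range (n + 1), ea l = ∑ l : Fin (n + 1), e l := by
            rw [← Fin.sum_univ_eq_sum_range]
            refine Finset.sum_congr rfl fun v _ => ?_
            have hv := v.isLt
            simp only [hea, dif_pos hv]
          rw [h1, merge_sum ea n i hi1 (by omega), h2]
        have L : dE n i (χ (n + 1) (tprod k fun l => MonoidAlgebra.of k (Zm m) (g ^ e l)))
            = (ζ ^ ∑ l, e l) • tprod k (fun v : Fin n => MonoidAlgebra.of k (Zm m) (g ^ jj v)) := by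
          rw [hχa (n + 1) e, map_smul, hEmid n i hi1 (by omega) (fun l => g ^ e l), hfun]
        have R : χ n (dA n i (tprod k fun l => MonoidAlgebra.of k (Zm m) (g ^ e l)))
            = (ζ ^ ∑ v : Fin n, jj v) •
              tprod k (fun v : Fin n => MonoidAlgebra.of k (Zm m) (g ^ jj v)) := by
          rw [hAmid n i hi1 (by omega) (fun l => g ^ e l), hfun, hχa n jj]
        rw [L, R, hsum]
      · -- last face
        have hi' : i = n + 1 := by omega
        subst hi'
        have L : dE n (n + 1) (χ (n + 1) (tprod k fun l => MonoidAlgebra.of k (Zm m) (g ^ e l)))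
            = (ζ ^ ∑ l, e l) •
              tprod k (fun v : Fin n => MonoidAlgebra.of k (Zm m) (g ^ e v.castSucc)) := by
          rw [hχa (n + 1) e, map_smul, hElast n (fun l => g ^ e l), hε, one_smul]
        have R : χ n (dA n (n + 1) (tprod k fun l => MonoidAlgebra.of k (Zm m) (g ^ e l)))
            = (ζ ^ e (Fin.last n) * ζ ^ ∑ v : Fin n, e v.castSucc) •
              tprod k (fun v : Fin n => MonoidAlgebra.of k (Zm m) (g ^ e v.castSucc)) := by
          rw [hAlast n (fun l => g ^ e l), map_smul, hχa n (fun v => e v.castSucc), hα, smul_smul]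
        rw [L, R, ← pow_add, Fin.sum_univ_castSucc (f := fun l => e l),
          Nat.add_comm (∑ v : Fin n, e v.castSucc) (e (Fin.last n))]
  · -- degeneracies
    intro n i hi
    apply mw_ext hg
    intro e
    simp only [LinearMap.comp_apply]
    set jj : Fin (n + 1) → ℕ := fun v =>
      if h : (v : ℕ) < i then e ⟨(v : ℕ), by have := v.isLt; omega⟩
      else if h2 : (v : ℕ) = i then 0
      else e ⟨(v : ℕ) - 1, by have := v.isLt; omega⟩ with hjj
    have hfun : (fun v : Fin (n + 1) =>
        if h : (v : ℕ) < i then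
          MonoidAlgebra.of k (Zm m) ((fun l => g ^ e l) ⟨(v : ℕ), by have := v.isLt; omega⟩)
        else if h2 : (v : ℕ) = i then 1
        else MonoidAlgebra.of k (Zm m) ((fun l => g ^ e l) ⟨(v : ℕ) - 1, by have := v.isLt; omega⟩))
        = fun v => MonoidAlgebra.of k (Zm m) (g ^ jj v) := by
      funext v
      by_cases h1 : (v : ℕ) < i <;> by_cases h2 : (v : ℕ) = i <;>
        simp [hjj, h1, h2, MonoidAlgebra.one_def]
    have hsum : ∑ v : Fin (n + 1), jj v = ∑ l : Fin n, e l := by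
      set ea : ℕ → ℕ := fun l => if h : l < n then e ⟨l, h⟩ else 0 with hea
      have h1 : ∑ v : Fin (n + 1), jj v = ∑ l ∈ Finset.range (n + 1),
          (if l < i then ea l else if l = i then 0 else ea (l - 1)) := by
        rw [← Fin.sum_univ_eq_sum_range]
        refine Finset.sum_congr rfl fun v _ => ?_
        have hv := v.isLt
        simp only [hjj, hea]
        by_cases h1 : (v : ℕ) < i
        · rw [dif_pos h1, if_pos h1, dif_pos (show (v : ℕ) < n by omega)]
        · rw [dif_neg h1, if_neg h1]
          by_cases h2 : (v : ℕ) = i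
          · rw [dif_pos h2, if_pos h2]
          · rw [dif_neg h2, if_neg h2, dif_pos (show (v : ℕ) - 1 < n by omega)]
      have h2 : ∑ l ∈ Finset.range n, ea l = ∑ l : Fin n, e l := by
        rw [← Fin.sum_univ_eq_sum_range]
        refine Finset.sum_congr rfl fun v _ => ?_
        simp only [hea, dif_pos v.isLt]
      rw [h1, insert_sum ea n i hi, h2]
    have L : sE n i (χ n (tprod k fun l => MonoidAlgebra.of k (Zm m) (g ^ e l)))
        = (ζ ^ ∑ l, e l) •
          tprod k (fun v : Fin (n + 1) => MonoidAlgebra.of k (Zm m) (g ^ jj v)) := by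
      rw [hχa n e, map_smul, hEs n i hi (fun l => g ^ e l), hfun]
    have R : χ (n + 1) (sA n i (tprod k fun l => MonoidAlgebra.of k (Zm m) (g ^ e l)))
        = (ζ ^ ∑ v : Fin (n + 1), jj v) •
          tprod k (fun v : Fin (n + 1) => MonoidAlgebra.of k (Zm m) (g ^ jj v)) := by
      rw [hAs n i hi (fun l => g ^ e l), hfun, hχa (n + 1) jj]
    rw [L, R, hsum]
  · -- cyclic operators
    intro n
    cases n with
    | zero => rw [hAt0, hEt0, LinearMap.id_comp, LinearMap.comp_id]
    | succ n =>
      apply mw_ext hg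
      intro e
      simp only [LinearMap.comp_apply]
      set S : ℕ := ∑ l, e l with hS
      set q : ℕ := rep hg (g ^ s * (g ^ S)⁻¹) with hqdef
      have hq : g ^ q = g ^ s * (g ^ S)⁻¹ := rep_spec hg _
      have hP : (List.ofFn fun l : Fin (n + 1) => g ^ e l).prod = g ^ S := by
        rw [List.prod_ofFn, Finset.prod_pow_eq_pow_sum]
      set jj : Fin (n + 1) → ℕ := Fin.cons q (fun v : Fin n => e v.castSucc) with hjj
      have hcons : (Fin.cons (MonoidAlgebra.of k (Zm m) (g ^ s * (g ^ S)⁻¹))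
          (fun v : Fin n => MonoidAlgebra.of k (Zm m) ((fun l => g ^ e l) v.castSucc))
            : Fin (n + 1) → A k m)
          = fun l => MonoidAlgebra.of k (Zm m) (g ^ jj l) := by
        funext l
        refine Fin.cases ?_ (fun v => ?_) l
        · simp [hjj, hq]
        · simp [hjj]
      have hgsum : g ^ (S + q) = g ^ s := by
        rw [pow_add, hq]
        group
      have hζsq : ζ ^ (S + q) = ζ ^ s := pow_eq_of_gpow_eq hg hζm hgsum
      have hsum2 : ∑ l : Fin (n + 1), jj l = q + ∑ v : Fin n, e v.castSucc := by
        rw [hjj, Fin.sum_cons]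
      have L : tE (n + 1) (χ (n + 1) (tprod k fun l => MonoidAlgebra.of k (Zm m) (g ^ e l)))
          = (ζ ^ S) • tprod k (fun l => MonoidAlgebra.of k (Zm m) (g ^ jj l)) := by
        rw [hχa (n + 1) e, map_smul, hEt n (fun l => g ^ e l), hε, hε, one_mul, one_smul,
          hP, hcons]
      have R : χ (n + 1) (tA (n + 1) (tprod k fun l => MonoidAlgebra.of k (Zm m) (g ^ e l)))
          = ((ζ ^ S * ζ ^ e (Fin.last n)) * ζ ^ (q + ∑ v : Fin n, e v.castSucc)) •
            tprod k (fun l => MonoidAlgebra.of k (Zm m) (g ^ jj l)) := by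
        rw [hAt n (fun l => g ^ e l), hP, hcons, map_smul, hχa (n + 1) jj, hsum2, hα, hα,
          smul_smul]
      rw [L, R]
      congr 1
      rw [← pow_add, ← pow_add]
      have hc : S + (S + q) = S + e (Fin.last n) + (q + ∑ v : Fin n, e v.castSucc) := by
        have hcs : ∑ v : Fin n, e v.castSucc + e (Fin.last n) = S := by
          rw [hS]; exact (Fin.sum_univ_castSucc (f := fun l => e l)).symm
        omega
      rw [← hc, pow_add, hζsq, hζs, mul_one]
  · -- inverse
    intro n
    have key : ∀ e : Fin n → ℕ,
        ζ ^ (∑ l, e l) * (ζ ^ (m - 1)) ^ (∑ l, e l) = 1 := by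
      intro e
      rw [← pow_mul, ← pow_add]
      have hm1 : 1 ≤ m := Nat.one_le_iff_ne_zero.mpr (NeZero.ne m)
      have hmm : (∑ l, e l) + (m - 1) * (∑ l, e l) = m * (∑ l, e l) := by
        cases m with
        | zero => omega
        | succ m' => simp only [Nat.add_sub_cancel]; ring
      rw [hmm, pow_mul, hζm, one_pow]
    constructor
    · apply mw_ext hg
      intro e
      simp only [LinearMap.comp_apply, LinearMap.id_apply]
      rw [hχa n e, map_smul, hχa' n e, smul_smul, key e, one_smul]
    · apply mw_ext hg
      intro e
      simp only [LinearMap.comp_apply, LinearMap.id_apply]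
      rw [hχa' n e, map_smul, hχa n e, smul_smul, mul_comm, key e, one_smul]


end CMGrp
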